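/- Let σ : ℝ → ℝ be continuously differentiable, fix discretisation points T_1, …, T_N ∈ ℝ^d and target values f_1, …, f_N ∈ ℝ, and for X = (a_1, …, a_n, w^1, …, w^n, w_0^1, …, w_0^n) set dev_i(X) = Σ_{j=1}^n a_j σ(w^j·T_i + w_0^j) − f_i and F(X) = max_{1≤i≤N} |dev_i(X)|. Suppose X* is a local minimizer of F with F(X*) > 0, let P = {i : dev_i(X*) = F(X*)}, N = {i : dev_i(X*) = −F(X*)}, and let V_i ∈ ℝ^{n(1+d)+n} be the vector whose j-th block (j = 1, …, n) is a_j* σ'(w^{j*}·T_i + w_0^{j*})·(1, T_i) and whose final n entries are σ(w^{1*}·T_i + w_0^{1*}), …, σ(w^{n*}·T_i + w_0^{n*}), all evaluated at X*. Then there exist λ_i ≥ 0 for i ∈ P ∪ N with Σ_{i∈P∪N} λ_i = 1 and Σ_{i∈P} λ_i V_i = Σ_{i∈N} λ_i V_i. -/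

import Mathlib

/-- The deviation at the `i`-th discretisation point for a neural network with one hidden
layer of `n` nodes, parameters `X = (a, w, w₀)`:
`dev_i(X) = ∑_{j=1}^n a_j σ(w^j ⬝ T_i + w₀^j) − f_i`. -/
noncomputable def dev {d N n : ℕ} (σ : ℝ → ℝ) (T : Fin N → Fin d → ℝ) (f : Fin N → ℝ)
    (X : (Fin n → ℝ) × (Fin n → Fin d → ℝ) × (Fin n → ℝ)) (i : Fin N) : ℝ :=
  (∑ j, X.1 j * σ ((∑ k, X.2.1 j k * T i k) + X.2.2 j)) - f i

/-- The uniform (Chebyshev/max) loss `F(X) = max_{1 ≤ i ≤ N} |dev_i(X)|`. -/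
noncomputable def unifLoss {d N n : ℕ} [NeZero N] (σ : ℝ → ℝ) (T : Fin N → Fin d → ℝ)
    (f : Fin N → ℝ) (X : (Fin n → ℝ) × (Fin n → Fin d → ℝ) × (Fin n → ℝ)) : ℝ :=
  Finset.univ.sup' Finset.univ_nonempty fun i => |dev σ T f X i|

/-- The vector `V_i ∈ ℝ^{n(1+d)+n}` (realized as `(Fin n → Fin (d+1) → ℝ) × (Fin n → ℝ)`):
the `j`-th block is `a_j σ'(w^j ⬝ T_i + w₀^j) • (1, T_i) ∈ ℝ^{1+d}` and the final `n`
entries are `σ(w^1 ⬝ T_i + w₀^1), …, σ(w^n ⬝ T_i + w₀^n)`. -/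
noncomputable def Vvec {d N n : ℕ} (σ : ℝ → ℝ) (T : Fin N → Fin d → ℝ)
    (X : (Fin n → ℝ) × (Fin n → Fin d → ℝ) × (Fin n → ℝ)) (i : Fin N) :
    (Fin n → Fin (d + 1) → ℝ) × (Fin n → ℝ) :=
  (fun j => (X.1 j * deriv σ ((∑ k, X.2.1 j k * T i k) + X.2.2 j)) •
      (Fin.cons 1 (T i) : Fin (d + 1) → ℝ),
   fun j => σ ((∑ k, X.2.1 j k * T i k) + X.2.2 j))

section Aux

private lemma Ldecomp {n d : ℕ} (L : ((Fin n → Fin (d+1) → ℝ) × (Fin n → ℝ)) →L[ℝ] ℝ)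
    (x : (Fin n → Fin (d+1) → ℝ) × (Fin n → ℝ)) :
    L x = (∑ j, ∑ k, x.1 j k * L (Pi.single j (Pi.single k 1), 0))
      + ∑ j, x.2 j * L (0, Pi.single j 1) := by
  have hx : x = (∑ j, ∑ k, x.1 j k • ((Pi.single j (Pi.single k 1), 0) :
        (Fin n → Fin (d+1) → ℝ) × (Fin n → ℝ)))
      + ∑ j, x.2 j • ((0, Pi.single j 1) :
        (Fin n → Fin (d+1) → ℝ) × (Fin n → ℝ)) := by
    refine Prod.ext ?_ ?_
    · simp only [Prod.fst_add, Prod.fst_sum, Prod.smul_fst, smul_zero, Finset.sum_const_zero,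
        add_zero]
      funext j' k'
      simp [Finset.sum_apply, Pi.single_apply, ite_apply, smul_eq_mul,
        Finset.sum_ite_eq, Finset.sum_ite_eq']
    · simp only [Prod.snd_add, Prod.snd_sum, Prod.smul_snd, smul_zero, Finset.sum_const_zero,
        zero_add]
      funext j'
      simp [Finset.sum_apply, Pi.single_apply, Finset.sum_ite_eq']
  conv_lhs => rw [hx]
  simp only [map_add, map_sum, map_smul, smul_eq_mul]

private lemma devDeriv {d N n : ℕ} (σ : ℝ → ℝ) (hσ : ContDiff ℝ 1 σ) (T : Fin N → Fin d → ℝ)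
    (f : Fin N → ℝ) (Xs hdir : (Fin n → ℝ) × (Fin n → Fin d → ℝ) × (Fin n → ℝ)) (i : Fin N) :
    HasDerivAt (fun t => dev σ T f (Xs + t • hdir) i)
      (∑ j, (hdir.1 j * σ ((∑ k, Xs.2.1 j k * T i k) + Xs.2.2 j)
        + Xs.1 j * (deriv σ ((∑ k, Xs.2.1 j k * T i k) + Xs.2.2 j)
            * ((∑ k, hdir.2.1 j k * T i k) + hdir.2.2 j)))) (0:ℝ) := by
  have hfun : (fun t => dev σ T f (Xs + t • hdir) i)
      = fun t => (∑ j, (Xs.1 j + t * hdir.1 j)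
          * σ ((((∑ k, Xs.2.1 j k * T i k) + Xs.2.2 j)
              + t * ((∑ k, hdir.2.1 j k * T i k) + hdir.2.2 j)))) - f i := by
    funext t
    unfold dev
    simp only [Prod.fst_add, Prod.snd_add, Prod.smul_fst, Prod.smul_snd, Pi.add_apply,
      Pi.smul_apply, smul_eq_mul]
    congr 1
    refine Finset.sum_congr rfl fun j _ => ?_
    congr 2
    rw [show (∑ x, (Xs.2.1 j x + t * hdir.2.1 j x) * T i x)
        = (∑ x, Xs.2.1 j x * T i x) + t * ∑ x, hdir.2.1 j x * T i x from by
      rw [Finset.mul_sum, ← Finset.sum_add_distrib]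
      exact Finset.sum_congr rfl fun k _ => by ring]
    ring
  rw [hfun]
  apply HasDerivAt.sub_const
  apply HasDerivAt.fun_sum
  intro j _
  set z := (∑ k, Xs.2.1 j k * T i k) + Xs.2.2 j with hz
  set b := (∑ k, hdir.2.1 j k * T i k) + hdir.2.2 j with hb
  have hA : HasDerivAt (fun t : ℝ => Xs.1 j + t * hdir.1 j) (hdir.1 j) 0 := by
    simpa using ((hasDerivAt_id (0:ℝ)).mul_const (hdir.1 j)).const_add (Xs.1 j)
  have hB : HasDerivAt (fun t : ℝ => z + t * b) b 0 := by
    simpa using ((hasDerivAt_id (0:ℝ)).mul_const b).const_add z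
  have hs : HasDerivAt σ (deriv σ z) (z + 0 * b) := by
    rw [zero_mul, add_zero]
    exact ((hσ.differentiable one_ne_zero) z).hasDerivAt
  have hcomp := hs.comp 0 hB
  have := hA.fun_mul hcomp
  simpa using this

end Aux

/-- Necessary optimality condition for uniform-loss approximation, one hidden layer:
if `X*` is a local minimizer of `F` with `F(X*) > 0`, `P` the set of positive maximal
deviation points and `Np` the set of negative maximal deviation points, then there are
convex multipliers `λᵢ ≥ 0`, `∑_{i∈P∪Np} λᵢ = 1`, with `∑_{i∈P} λᵢ Vᵢ = ∑_{i∈Np} λᵢ Vᵢ`. -/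
theorem uniform_one_hidden_layer_necessary_condition (d N n : ℕ) (hd : 0 < d) [NeZero N]
    (hn : 0 < n) (σ : ℝ → ℝ) (hσ : ContDiff ℝ 1 σ) (T : Fin N → Fin d → ℝ) (f : Fin N → ℝ)
    (Xs : (Fin n → ℝ) × (Fin n → Fin d → ℝ) × (Fin n → ℝ))
    (hmin : IsLocalMin (unifLoss σ T f) Xs)
    (hpos : 0 < unifLoss σ T f Xs)
    (P Np : Finset (Fin N))
    (hP : ∀ i, i ∈ P ↔ dev σ T f Xs i = unifLoss σ T f Xs)
    (hNp : ∀ i, i ∈ Np ↔ dev σ T f Xs i = -unifLoss σ T f Xs) :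
    ∃ lam : Fin N → ℝ, (∀ i ∈ P ∪ Np, 0 ≤ lam i) ∧
      (∑ i ∈ P ∪ Np, lam i) = 1 ∧
      (∑ i ∈ P, lam i • Vvec σ T Xs i) = ∑ i ∈ Np, lam i • Vvec σ T Xs i := by
  classical
  set F := unifLoss σ T f Xs with hFdef
  have hFle : ∀ i, |dev σ T f Xs i| ≤ F := fun i =>
    Finset.le_sup' (fun i => |dev σ T f Xs i|) (Finset.mem_univ i)
  have hdisj : Disjoint P Np := by
    rw [Finset.disjoint_left]
    intro i hiP hiNp
    have h1 := (hP i).mp hiP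
    have h2 := (hNp i).mp hiNp
    rw [h1] at h2
    linarith
  have hPNp : ∀ i, i ∉ P → i ∉ Np → |dev σ T f Xs i| < F := by
    intro i h1 h2
    refine lt_of_le_of_ne (hFle i) ?_
    intro h
    rcases (abs_eq hpos.le).mp h with h | h
    · exact h1 ((hP i).mpr h)
    · exact h2 ((hNp i).mpr h)
  have hSne : (P ∪ Np).Nonempty := by
    obtain ⟨i₀, -, hi₀⟩ := Finset.exists_mem_eq_sup' (Finset.univ_nonempty (α := Fin N))
      (fun i => |dev σ T f Xs i|)
    have hEq : F = |dev σ T f Xs i₀| := hi₀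
    refine ⟨i₀, ?_⟩
    by_contra hcon
    simp only [Finset.mem_union, not_or] at hcon
    have := hPNp i₀ hcon.1 hcon.2
    linarith
  -- the signed gradient vectors
  set g : Fin N → (Fin n → Fin (d+1) → ℝ) × (Fin n → ℝ) :=
    fun i => if i ∈ P then Vvec σ T Xs i else -Vvec σ T Xs i with hgdef
  -- main claim: 0 is a convex combination of the g i, i ∈ P ∪ Np
  have key : ∃ lam : Fin N → ℝ, (∀ i, 0 ≤ lam i) ∧ (∑ i ∈ P ∪ Np, lam i) = 1 ∧
      (∑ i ∈ P ∪ Np, lam i • g i) = 0 := by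
    by_contra hcon
    push_neg at hcon
    obtain ⟨i₀, hi₀S⟩ := hSne
    set g' : Fin N → (Fin n → Fin (d+1) → ℝ) × (Fin n → ℝ) :=
      fun i => if i ∈ P ∪ Np then g i else g i₀ with hg'def
    set Tmap : (Fin N → ℝ) → (Fin n → Fin (d+1) → ℝ) × (Fin n → ℝ) :=
      fun lam => ∑ i, lam i • g' i with hTdef
    have hTlin : IsLinearMap ℝ Tmap := by
      constructor
      · intro a b
        simp only [hTdef, Pi.add_apply, add_smul, Finset.sum_add_distrib]
      · intro c a
        simp only [hTdef, Pi.smul_apply, smul_eq_mul, mul_smul, ← Finset.smul_sum]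
    have hTcont : Continuous Tmap :=
      continuous_finset_sum _ fun i _ => (continuous_apply i).smul continuous_const
    have hKconv : Convex ℝ (Tmap '' stdSimplex ℝ (Fin N)) :=
      (convex_stdSimplex ℝ (Fin N)).is_linear_image hTlin
    have hKcl : IsClosed (Tmap '' stdSimplex ℝ (Fin N)) :=
      ((isCompact_stdSimplex ℝ (Fin N)).image hTcont).isClosed
    have h0K : (0 : (Fin n → Fin (d+1) → ℝ) × (Fin n → ℝ)) ∉ Tmap '' stdSimplex ℝ (Fin N) := by
      rintro ⟨lam, hlamS, hlam0⟩
      refine hcon (fun i => lam i + (if i = i₀ then ∑ j ∈ (P ∪ Np)ᶜ, lam j else 0))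
        (fun i => ?_) ?_ ?_
      · refine add_nonneg (hlamS.1 i) ?_
        split
        · exact Finset.sum_nonneg fun j _ => hlamS.1 j
        · exact le_refl 0
      · rw [Finset.sum_add_distrib, Finset.sum_ite_eq' (P ∪ Np) i₀, if_pos hi₀S,
          Finset.sum_add_sum_compl, hlamS.2]
      · have hsplit : (0 : (Fin n → Fin (d+1) → ℝ) × (Fin n → ℝ))
            = ∑ i ∈ P ∪ Np, lam i • g i + (∑ j ∈ (P ∪ Np)ᶜ, lam j) • g i₀ := by
          rw [← hlam0, hTdef]
          simp only []
          rw [← Finset.sum_add_sum_compl (P ∪ Np) (fun i => lam i • g' i), Finset.sum_smul]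
          congr 1
          · exact Finset.sum_congr rfl fun i hi => by rw [hg'def]; simp only [if_pos hi]
          · refine Finset.sum_congr rfl fun i hi => ?_
            rw [hg'def]
            simp only [if_neg (Finset.mem_compl.mp hi)]
        rw [show (∑ i ∈ P ∪ Np, (lam i + if i = i₀ then ∑ j ∈ (P ∪ Np)ᶜ, lam j else 0) • g i)
            = ∑ i ∈ P ∪ Np, lam i • g i
              + ∑ i ∈ P ∪ Np, (if i = i₀ then ∑ j ∈ (P ∪ Np)ᶜ, lam j else 0) • g i from by
          rw [← Finset.sum_add_distrib]
          exact Finset.sum_congr rfl fun i _ => add_smul _ _ _]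
        rw [show (∑ i ∈ P ∪ Np, (if i = i₀ then ∑ j ∈ (P ∪ Np)ᶜ, lam j else 0) • g i)
            = (∑ j ∈ (P ∪ Np)ᶜ, lam j) • g i₀ from by
          have hper : ∀ i ∈ P ∪ Np, ((if i = i₀ then ∑ j ∈ (P ∪ Np)ᶜ, lam j else 0) • g i)
              = (if i = i₀ then (∑ j ∈ (P ∪ Np)ᶜ, lam j) • g i₀ else 0) := by
            intro i _
            by_cases h : i = i₀ <;> simp [h]
          rw [Finset.sum_congr rfl hper, Finset.sum_ite_eq' (P ∪ Np) i₀, if_pos hi₀S]]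
        exact hsplit.symm
    obtain ⟨L, u, hLK, hu⟩ := geometric_hahn_banach_closed_point hKconv hKcl h0K
    have hu0 : u < 0 := by simpa using hu
    have hgneg : ∀ i ∈ P ∪ Np, L (g i) < 0 := by
      intro i hiS
      have hmem : g i ∈ Tmap '' stdSimplex ℝ (Fin N) := by
        refine ⟨fun j => if j = i then 1 else 0, ⟨fun j => ?_, ?_⟩, ?_⟩
        · by_cases h : j = i <;> simp [h]
        · simp [Finset.sum_ite_eq']
        · rw [hTdef]
          simp only [ite_smul, one_smul, zero_smul, Finset.sum_ite_eq', Finset.mem_univ,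
            if_pos, hg'def]
          simp only [if_pos hiS]
      exact lt_trans (hLK _ hmem) hu0
    -- build the descent direction from L
    set c1 : Fin n → Fin (d+1) → ℝ := fun j k => L (Pi.single j (Pi.single k 1), 0) with hc1
    set c2 : Fin n → ℝ := fun j => L (0, Pi.single j 1) with hc2
    set hdir : (Fin n → ℝ) × (Fin n → Fin d → ℝ) × (Fin n → ℝ) :=
      (fun j => c2 j, fun j k => c1 j k.succ, fun j => c1 j 0) with hdirdef
    have hder : ∀ i, HasDerivAt (fun t => dev σ T f (Xs + t • hdir) i)
        (L (Vvec σ T Xs i)) (0:ℝ) := by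
      intro i
      have h1 := devDeriv σ hσ T f Xs hdir i
      have hc1' : ∀ j k, L (Pi.single j (Pi.single k 1), 0) = c1 j k := fun j k => rfl
      have hc2' : ∀ j, L (0, Pi.single j 1) = c2 j := fun j => rfl
      have hEq : (∑ j, (hdir.1 j * σ ((∑ k, Xs.2.1 j k * T i k) + Xs.2.2 j)
          + Xs.1 j * (deriv σ ((∑ k, Xs.2.1 j k * T i k) + Xs.2.2 j)
              * ((∑ k, hdir.2.1 j k * T i k) + hdir.2.2 j))))
          = L (Vvec σ T Xs i) := by
        rw [Ldecomp L (Vvec σ T Xs i)]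
        simp only [Vvec, Pi.smul_apply, smul_eq_mul, Fin.sum_univ_succ, Fin.cons_zero,
          Fin.cons_succ, mul_one, hc1', hc2', hdirdef]
        rw [← Finset.sum_add_distrib]
        refine Finset.sum_congr rfl fun j _ => ?_
        generalize (∑ k, Xs.2.1 j k * T i k) + Xs.2.2 j = Z
        rw [show (∑ k, Xs.1 j * deriv σ Z * T i k * c1 j k.succ)
            = Xs.1 j * (deriv σ Z * ∑ k, c1 j k.succ * T i k) from by
          rw [Finset.mul_sum, Finset.mul_sum]
          exact Finset.sum_congr rfl fun k _ => by ring]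
        ring
      rw [← hEq]
      exact h1
    -- contradiction with local minimality along the direction hdir
    have hφ0 : ∀ i, dev σ T f (Xs + (0:ℝ) • hdir) i = dev σ T f Xs i := by
      intro i; rw [zero_smul, add_zero]
    have hev : ∀ i, ∀ᶠ t in nhdsWithin (0:ℝ) (Set.Ioi 0),
        |dev σ T f (Xs + t • hdir) i| < F := by
      intro i
      have hc : ContinuousAt (fun t : ℝ => dev σ T f (Xs + t • hdir) i) (0:ℝ) := (hder i).continuousAt
      by_cases hiP : i ∈ P
      · have hL : L (Vvec σ T Xs i) < 0 := by
          have hneg := hgneg i (Finset.mem_union_left _ hiP)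
          simp only [hgdef, hiP, if_true] at hneg
          exact hneg
        have hslope := hasDerivAt_iff_tendsto_slope.mp (hder i)
        have h2 : ∀ᶠ t in nhdsWithin (0:ℝ) (Set.Ioi 0),
            slope (fun t => dev σ T f (Xs + t • hdir) i) 0 t < 0 :=
          (hslope.eventually_lt_const hL).filter_mono
            (nhdsWithin_mono _ fun t ht => Set.mem_compl_singleton_iff.mpr (ne_of_gt ht))
        have h3 : ∀ᶠ t in nhdsWithin (0:ℝ) (Set.Ioi 0), -F < dev σ T f (Xs + t • hdir) i := by
          have hb : (-F) < (fun t : ℝ => dev σ T f (Xs + t • hdir) i) (0:ℝ) := by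
            simp only [hφ0 i, (hP i).mp hiP]; linarith
          exact (hc.eventually_const_lt hb).filter_mono nhdsWithin_le_nhds
        filter_upwards [h2, h3, self_mem_nhdsWithin] with t hst hFt ht
        rw [slope_def_field] at hst
        have htpos : (0:ℝ) < t := ht
        have hnum : dev σ T f (Xs + t • hdir) i - dev σ T f (Xs + (0:ℝ) • hdir) i < 0 := by
          rcases div_neg_iff.mp hst with ⟨h', h''⟩ | ⟨h', h''⟩
          · linarith
          · linarith
        rw [hφ0 i, (hP i).mp hiP] at hnum
        exact abs_lt.mpr ⟨hFt, by linarith⟩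
      · by_cases hiNp : i ∈ Np
        · have hL : 0 < L (Vvec σ T Xs i) := by
            have hneg := hgneg i (Finset.mem_union_right _ hiNp)
            simp only [hgdef, hiP, if_false, map_neg] at hneg
            linarith
          have hslope := hasDerivAt_iff_tendsto_slope.mp (hder i)
          have h2 : ∀ᶠ t in nhdsWithin (0:ℝ) (Set.Ioi 0),
              0 < slope (fun t => dev σ T f (Xs + t • hdir) i) 0 t :=
            (hslope.eventually_const_lt hL).filter_mono
              (nhdsWithin_mono _ fun t ht => Set.mem_compl_singleton_iff.mpr (ne_of_gt ht))
          have h3 : ∀ᶠ t in nhdsWithin (0:ℝ) (Set.Ioi 0),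
              dev σ T f (Xs + t • hdir) i < F := by
            have hb : (fun t : ℝ => dev σ T f (Xs + t • hdir) i) (0:ℝ) < F := by
              simp only [hφ0 i, (hNp i).mp hiNp]; linarith
            exact (hc.eventually_lt_const hb).filter_mono nhdsWithin_le_nhds
          filter_upwards [h2, h3, self_mem_nhdsWithin] with t hst hFt ht
          rw [slope_def_field] at hst
          have htpos : (0:ℝ) < t := ht
          have hnum : 0 < dev σ T f (Xs + t • hdir) i - dev σ T f (Xs + (0:ℝ) • hdir) i := by
            rcases div_pos_iff.mp hst with ⟨h', h''⟩ | ⟨h', h''⟩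
            · linarith
            · linarith
          rw [hφ0 i, (hNp i).mp hiNp] at hnum
          exact abs_lt.mpr ⟨by linarith, hFt⟩
        · have hlt : |(fun t : ℝ => dev σ T f (Xs + t • hdir) i) (0:ℝ)| < F := by
            simp only [hφ0 i]
            exact hPNp i hiP hiNp
          exact (hc.abs.eventually_lt_const hlt).filter_mono nhdsWithin_le_nhds
    have hall := Filter.eventually_all.mpr hev
    have htd : Filter.Tendsto (fun t : ℝ => Xs + t • hdir) (nhds 0) (nhds Xs) := by
      have hcont : Continuous fun t : ℝ => Xs + t • hdir :=
        continuous_const.add (continuous_id.smul continuous_const)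
      have h := hcont.tendsto 0
      simpa using h
    have hmin' : ∀ᶠ X in nhds Xs, unifLoss σ T f Xs ≤ unifLoss σ T f X := hmin
    have hminev : ∀ᶠ t in nhdsWithin (0:ℝ) (Set.Ioi 0),
        F ≤ unifLoss σ T f (Xs + t • hdir) :=
      (htd.eventually hmin').filter_mono nhdsWithin_le_nhds
    obtain ⟨t, hts, htm⟩ := (hall.and hminev).exists
    have hlt : unifLoss σ T f (Xs + t • hdir) < F := by
      rw [unifLoss]
      exact (Finset.sup'_lt_iff _).mpr fun i _ => hts i
    linarith
  -- derive the conclusion from the key claim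
  obtain ⟨lam, h0, h1, h2⟩ := key
  refine ⟨lam, fun i _ => h0 i, h1, ?_⟩
  rw [Finset.sum_union hdisj] at h2
  have e1 : (∑ i ∈ P, lam i • g i) = ∑ i ∈ P, lam i • Vvec σ T Xs i :=
    Finset.sum_congr rfl fun i hi => by rw [hgdef]; simp only [if_pos hi]
  have e2 : (∑ i ∈ Np, lam i • g i) = -∑ i ∈ Np, lam i • Vvec σ T Xs i := by
    rw [← Finset.sum_neg_distrib]
    refine Finset.sum_congr rfl fun i hi => ?_
    rw [hgdef]
    simp only [if_neg (Finset.disjoint_right.mp hdisj hi), smul_neg]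
  rw [e1, e2] at h2
  exact sub_eq_zero.mp (by rw [sub_eq_add_neg]; exact h2)
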